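/- Fix α, β > 0 and r > 0. Let X ~ Inv-Gamma(α, β), and define x_{α,β}(r) := β(exp(r) - exp(-r))/(2αr). Then for every x ∈ (0, ∞), P(|log(X/x)| ≤ r) ≤ P(|log(X/x_{α,β}(r))| ≤ r); i.e., x_{α,β}(r) maximizes x ↦ P(x·exp(-r) ≤ X ≤ x·exp(r)). -/

import Mathlib

open MeasureTheory Real Set

/-- Pointwise comparison of the density under multiplicative shift. -/
lemma g_key (a b : ℝ) (ha : 0 < a) (hb : 0 < b) (t u : ℝ) (ht : 0 < t)
    (h : b * (1 - Real.exp (-u)) ≤ u * a * t) :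
    Real.exp u * (b ^ a / Real.Gamma a * (t * Real.exp u) ^ (-a - 1) *
        Real.exp (-b / (t * Real.exp u)))
      ≤ b ^ a / Real.Gamma a * t ^ (-a - 1) * Real.exp (-b / t) := by
  have hC : 0 ≤ b ^ a / Real.Gamma a :=
    le_of_lt (div_pos (Real.rpow_pos_of_pos hb a) (Real.Gamma_pos_of_pos ha))
  have hte : 0 < t * Real.exp u := mul_pos ht (Real.exp_pos u)
  have h1 : (t * Real.exp u) ^ (-a - 1) = t ^ (-a - 1) * Real.exp (u * (-a - 1)) := by
    rw [Real.mul_rpow ht.le (Real.exp_pos u).le, Real.rpow_def_of_pos (Real.exp_pos u),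
      Real.log_exp]
  have h2 : -b / (t * Real.exp u) = -(b * Real.exp (-u)) / t := by
    rw [Real.exp_neg]; field_simp
  rw [h1, h2]
  have key : Real.exp (u + u * (-a - 1) + -(b * Real.exp (-u)) / t) ≤ Real.exp (-b / t) := by
    apply Real.exp_le_exp.mpr
    have h' : b * (1 - Real.exp (-u)) / t ≤ u * a := by
      rw [div_le_iff₀ ht]; exact h
    have hid : b * (1 - Real.exp (-u)) / t = b / t - b * Real.exp (-u) / t := by ring
    rw [hid] at h'
    have e1 : u + u * (-a - 1) + -(b * Real.exp (-u)) / t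
        = -(u * a) - b * Real.exp (-u) / t := by ring
    have e2 : -b / t = -(b / t) := by ring
    rw [e1, e2]
    linarith
  have hpow : 0 ≤ t ^ (-a - 1) := (Real.rpow_pos_of_pos ht _).le
  calc Real.exp u * (b ^ a / Real.Gamma a * (t ^ (-a - 1) * Real.exp (u * (-a - 1))) *
          Real.exp (-(b * Real.exp (-u)) / t))
      = b ^ a / Real.Gamma a * t ^ (-a - 1) *
          Real.exp (u + u * (-a - 1) + -(b * Real.exp (-u)) / t) := by
        rw [Real.exp_add, Real.exp_add]; ring
    _ ≤ b ^ a / Real.Gamma a * t ^ (-a - 1) * Real.exp (-b / t) := by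
        apply mul_le_mul_of_nonneg_left key (mul_nonneg hC hpow)

/-- Interval integrability of the density on intervals of positive reals. -/
lemma g_intble (a b : ℝ) (u v : ℝ) (hu : 0 < u) (hv : 0 < v) :
    IntervalIntegrable
      (fun t => b ^ a / Real.Gamma a * t ^ (-a - 1) * Real.exp (-b / t)) volume u v := by
  apply ContinuousOn.intervalIntegrable
  have hsub : Set.uIcc u v ⊆ {t : ℝ | 0 < t} := by
    intro t htt
    have := htt.1
    have hmin : 0 < min u v := lt_min hu hv
    exact lt_of_lt_of_le hmin (by simpa [Set.uIcc] using this)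
  apply ContinuousOn.mono _ hsub
  apply ContinuousOn.mul
  · apply ContinuousOn.mul continuousOn_const
    intro t htt
    exact (Real.continuousAt_rpow_const t _ (Or.inl (ne_of_gt htt))).continuousWithinAt
  · apply Real.continuous_exp.comp_continuousOn
    apply ContinuousOn.div continuousOn_const continuousOn_id
    intro t htt; exact ne_of_gt htt

/-- The inverse gamma measure `Inv-Gamma(α, β)` on `(0, ∞)`, with density
`(β^α / Γ(α)) x^{-α-1} exp (-β/x)` with respect to Lebesgue measure. -/
noncomputable def invGammaMeasure (a b : ℝ) : Measure ℝ :=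
  volume.withDensity fun x =>
    ENNReal.ofReal
      (if 0 < x then b ^ a / Real.Gamma a * x ^ (-a - 1) * Real.exp (-b / x) else 0)

lemma invGamma_window (a b : ℝ) (ha : 0 < a) (hb : 0 < b) (x r : ℝ) (hx : 0 < x) (hr : 0 < r) :
    invGammaMeasure a b {t | |Real.log (t / x)| ≤ r} =
      ENNReal.ofReal (∫ t in (x * Real.exp (-r))..(x * Real.exp r),
        b ^ a / Real.Gamma a * t ^ (-a - 1) * Real.exp (-b / t)) := by
  set g : ℝ → ℝ := fun t => b ^ a / Real.Gamma a * t ^ (-a - 1) * Real.exp (-b / t) with hg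
  have hmeas : MeasurableSet {t : ℝ | |Real.log (t / x)| ≤ r} := by
    apply measurableSet_le _ measurable_const
    exact (Real.measurable_log.comp (measurable_id.div_const x)).abs
  rw [invGammaMeasure, withDensity_apply _ hmeas]
  have hle : x * Real.exp (-r) ≤ x * Real.exp r := by
    apply mul_le_mul_of_nonneg_left (Real.exp_le_exp.mpr (by linarith)) hx.le
  have hset : {t : ℝ | |Real.log (t / x)| ≤ r} ∩ Set.Ioi 0
      = Set.Icc (x * Real.exp (-r)) (x * Real.exp r) := by
    ext t
    simp only [Set.mem_inter_iff, Set.mem_setOf_eq, Set.mem_Ioi, Set.mem_Icc, abs_le]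
    constructor
    · rintro ⟨⟨h1, h2⟩, ht⟩
      have htx : 0 < t / x := div_pos ht hx
      constructor
      · have := (Real.le_log_iff_exp_le htx).mp h1
        calc x * Real.exp (-r) ≤ x * (t / x) :=
              mul_le_mul_of_nonneg_left this hx.le
          _ = t := by field_simp
      · have := (Real.log_le_iff_le_exp htx).mp h2
        calc t = x * (t / x) := by field_simp
          _ ≤ x * Real.exp r := mul_le_mul_of_nonneg_left this hx.le
    · rintro ⟨h1, h2⟩
      have ht : 0 < t := lt_of_lt_of_le (mul_pos hx (Real.exp_pos _)) h1
      have htx : 0 < t / x := div_pos ht hx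
      refine ⟨⟨?_, ?_⟩, ht⟩
      · apply (Real.le_log_iff_exp_le htx).mpr
        rw [le_div_iff₀ hx]
        linarith [h1]
      · apply (Real.log_le_iff_le_exp htx).mpr
        rw [div_le_iff₀ hx]
        linarith [h2]
  have hind : ∀ t : ℝ, ENNReal.ofReal (if 0 < t then g t else 0)
      = Set.indicator (Set.Ioi (0:ℝ)) (fun t => ENNReal.ofReal (g t)) t := by
    intro t
    by_cases ht : 0 < t <;> simp [Set.indicator_apply, Set.mem_Ioi, ht]
  calc ∫⁻ t in {t : ℝ | |Real.log (t / x)| ≤ r},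
          ENNReal.ofReal (if 0 < t then g t else 0)
      = ∫⁻ t in {t : ℝ | |Real.log (t / x)| ≤ r},
          Set.indicator (Set.Ioi (0:ℝ)) (fun t => ENNReal.ofReal (g t)) t := by
        simp_rw [hind]
    _ = ∫⁻ t in {t : ℝ | |Real.log (t / x)| ≤ r} ∩ Set.Ioi 0, ENNReal.ofReal (g t) := by
        rw [lintegral_indicator measurableSet_Ioi,
          Measure.restrict_restrict measurableSet_Ioi, Set.inter_comm]
    _ = ∫⁻ t in Set.Icc (x * Real.exp (-r)) (x * Real.exp r), ENNReal.ofReal (g t) := by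
        rw [hset]
    _ = ENNReal.ofReal (∫ t in Set.Icc (x * Real.exp (-r)) (x * Real.exp r), g t) := by
        rw [ofReal_integral_eq_lintegral_ofReal]
        · have h2 := (g_intble a b (x * Real.exp (-r)) (x * Real.exp r)
            (mul_pos hx (Real.exp_pos _)) (mul_pos hx (Real.exp_pos _))).1
          show IntegrableOn g _ _
          rw [integrableOn_Icc_iff_integrableOn_Ioc]
          exact h2
        · apply (ae_restrict_iff' measurableSet_Icc).mpr
          apply Filter.Eventually.of_forall
          intro t htt
          have ht : 0 < t := lt_of_lt_of_le (mul_pos hx (Real.exp_pos _)) htt.1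
          have : 0 < g t := by
            apply mul_pos (mul_pos (div_pos (Real.rpow_pos_of_pos hb a)
              (Real.Gamma_pos_of_pos ha)) (Real.rpow_pos_of_pos ht _)) (Real.exp_pos _)
          exact this.le
    _ = ENNReal.ofReal (∫ t in (x * Real.exp (-r))..(x * Real.exp r), g t) := by
        rw [intervalIntegral.integral_of_le hle, ← integral_Icc_eq_integral_Ioc]


lemma exp_shift (x u v : ℝ) : x * Real.exp u * Real.exp v = x * Real.exp (u + v) := by
  rw [mul_assoc, ← Real.exp_add]

lemma key_compare (a b r : ℝ) (ha : 0 < a) (hb : 0 < b) (hr : 0 < r) (x : ℝ) (hx : 0 < x) :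
    (∫ t in (x * Real.exp (-r))..(x * Real.exp r),
        b ^ a / Real.Gamma a * t ^ (-a - 1) * Real.exp (-b / t)) ≤
      ∫ t in ((b * (Real.exp r - Real.exp (-r)) / (2 * a * r)) * Real.exp (-r))..
          ((b * (Real.exp r - Real.exp (-r)) / (2 * a * r)) * Real.exp r),
        b ^ a / Real.Gamma a * t ^ (-a - 1) * Real.exp (-b / t) := by
  set g : ℝ → ℝ := fun t => b ^ a / Real.Gamma a * t ^ (-a - 1) * Real.exp (-b / t) with hg
  set X : ℝ := b * (Real.exp r - Real.exp (-r)) / (2 * a * r) with hXdef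
  have hrr : Real.exp (-r) < Real.exp r := Real.exp_lt_exp.mpr (by linarith)
  have hX : 0 < X := div_pos (mul_pos hb (by linarith)) (by positivity)
  set p := x * Real.exp (-r) with hp
  set q := x * Real.exp r with hq
  set P := X * Real.exp (-r) with hP
  set Q := X * Real.exp r with hQ
  have hp0 : 0 < p := mul_pos hx (Real.exp_pos _)
  have hq0 : 0 < q := mul_pos hx (Real.exp_pos _)
  have hP0 : 0 < P := mul_pos hX (Real.exp_pos _)
  have hQ0 : 0 < Q := mul_pos hX (Real.exp_pos _)
  -- the two critical identities
  have h2arQ : 2 * a * r * Q = b * Real.exp (2 * r) - b := by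
    have e1 : Real.exp r * Real.exp r = Real.exp (2 * r) := by
      rw [← Real.exp_add]; ring_nf
    have e2 : Real.exp (-r) * Real.exp r = 1 := by
      rw [← Real.exp_add]; simp
    rw [hQ, hXdef]
    field_simp
    nlinarith [e1, e2]
  have h2arP : 2 * a * r * P = b - b * Real.exp (-(2 * r)) := by
    have e1 : Real.exp (-r) * Real.exp (-r) = Real.exp (-(2 * r)) := by
      rw [← Real.exp_add]; ring_nf
    have e2 : Real.exp r * Real.exp (-r) = 1 := by
      rw [← Real.exp_add]; simp
    rw [hP, hXdef]
    field_simp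
    nlinarith [e1, e2]
  rcases le_total x X with hxX | hxX
  · -- x ≤ X
    have hqQ : q ≤ Q := mul_le_mul_of_nonneg_right hxX (Real.exp_pos _).le
    have hpP : p ≤ P := mul_le_mul_of_nonneg_right hxX (Real.exp_pos _).le
    have E1 := intervalIntegral.integral_add_adjacent_intervals
      (g_intble a b p q hp0 hq0) (g_intble a b q Q hq0 hQ0)
    have E2 := intervalIntegral.integral_add_adjacent_intervals
      (g_intble a b p P hp0 hP0) (g_intble a b P Q hP0 hQ0)
    have hmain : (∫ t in p..P, g t) ≤ ∫ t in q..Q, g t := by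
      have hc : Real.exp (-(2 * r)) ≠ 0 := (Real.exp_pos _).ne'
      have hqc : q * Real.exp (-(2 * r)) = p := by
        rw [hq, hp, exp_shift]; ring_nf
      have hQc : Q * Real.exp (-(2 * r)) = P := by
        rw [hQ, hP, exp_shift]; ring_nf
      have hsub : (∫ s in q..Q, Real.exp (-(2 * r)) * g (s * Real.exp (-(2 * r))))
          = ∫ t in p..P, g t := by
        rw [intervalIntegral.integral_const_mul,
          intervalIntegral.integral_comp_mul_right g hc, hqc, hQc, smul_eq_mul,
          ← mul_assoc, mul_inv_cancel₀ hc, one_mul]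
      rw [← hsub]
      apply intervalIntegral.integral_mono_on hqQ
      · -- integrability of the shifted function
        have h1 := ((g_intble a b p P hp0 hP0).comp_mul_right
          (c := Real.exp (-(2 * r)))).const_mul (Real.exp (-(2 * r)))
        have hd1 : p / Real.exp (-(2 * r)) = q := by
          rw [eq_comm, eq_div_iff hc, hqc]
        have hd2 : P / Real.exp (-(2 * r)) = Q := by
          rw [eq_comm, eq_div_iff hc, hQc]
        rwa [hd1, hd2] at h1
      · exact g_intble a b q Q hq0 hQ0
      · intro s hs
        apply g_key a b ha hb s (-(2 * r)) (lt_of_lt_of_le hq0 hs.1)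
        have hsQ : s ≤ Q := hs.2
        have : 2 * a * r * s ≤ 2 * a * r * Q :=
          mul_le_mul_of_nonneg_left hsQ (by positivity)
        rw [neg_neg]
        nlinarith [h2arQ]
    linarith [E1, E2, hmain]
  · -- X ≤ x
    have hqQ : Q ≤ q := mul_le_mul_of_nonneg_right hxX (Real.exp_pos _).le
    have hpP : P ≤ p := mul_le_mul_of_nonneg_right hxX (Real.exp_pos _).le
    have E1 := intervalIntegral.integral_add_adjacent_intervals
      (g_intble a b P Q hP0 hQ0) (g_intble a b Q q hQ0 hq0)
    have E2 := intervalIntegral.integral_add_adjacent_intervals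
      (g_intble a b P p hP0 hp0) (g_intble a b p q hp0 hq0)
    have hmain : (∫ t in Q..q, g t) ≤ ∫ t in P..p, g t := by
      have hc : Real.exp (2 * r) ≠ 0 := (Real.exp_pos _).ne'
      have hPc : P * Real.exp (2 * r) = Q := by
        rw [hQ, hP, exp_shift]; ring_nf
      have hpc : p * Real.exp (2 * r) = q := by
        rw [hq, hp, exp_shift]; ring_nf
      have hsub : (∫ s in P..p, Real.exp (2 * r) * g (s * Real.exp (2 * r)))
          = ∫ t in Q..q, g t := by
        rw [intervalIntegral.integral_const_mul,
          intervalIntegral.integral_comp_mul_right g hc, hPc, hpc, smul_eq_mul,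
          ← mul_assoc, mul_inv_cancel₀ hc, one_mul]
      rw [← hsub]
      apply intervalIntegral.integral_mono_on hpP
      · have h1 := ((g_intble a b Q q hQ0 hq0).comp_mul_right
          (c := Real.exp (2 * r))).const_mul (Real.exp (2 * r))
        have hd1 : Q / Real.exp (2 * r) = P := by
          rw [eq_comm, eq_div_iff hc, hPc]
        have hd2 : q / Real.exp (2 * r) = p := by
          rw [eq_comm, eq_div_iff hc, hpc]
        rwa [hd1, hd2] at h1
      · exact g_intble a b P p hP0 hp0
      · intro s hs
        apply g_key a b ha hb s (2 * r) (lt_of_lt_of_le hP0 hs.1)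
        have hsP : P ≤ s := hs.1
        have : 2 * a * r * P ≤ 2 * a * r * s :=
          mul_le_mul_of_nonneg_left hsP (by positivity)
        nlinarith [h2arP]
    linarith [E1, E2, hmain]

/-- For `X ~ Inv-Gamma(α, β)` and `r > 0`, the point `x_{α,β}(r) = β (e^r - e^{-r})/(2αr)`
maximizes `x ↦ P(|log (X/x)| ≤ r)` over `x ∈ (0, ∞)`. -/
theorem invGamma_log_window_maximizer (a b : ℝ) (ha : 0 < a) (hb : 0 < b)
    (r : ℝ) (hr : 0 < r) :
    ∀ x : ℝ, 0 < x →
      invGammaMeasure a b {t | |Real.log (t / x)| ≤ r} ≤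
        invGammaMeasure a b
          {t | |Real.log (t / (b * (Real.exp r - Real.exp (-r)) / (2 * a * r)))| ≤ r} := by
  intro x hx
  have hrr : Real.exp (-r) < Real.exp r := Real.exp_lt_exp.mpr (by linarith)
  have hX : 0 < b * (Real.exp r - Real.exp (-r)) / (2 * a * r) :=
    div_pos (mul_pos hb (by linarith)) (by positivity)
  rw [invGamma_window a b ha hb x r hx hr, invGamma_window a b ha hb _ r hX hr]
  exact ENNReal.ofReal_le_ofReal (key_compare a b r ha hb hr x hx)
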